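/- arXiv:2104.01749 — 5 statements merged into one kernel-verified Lean document; each statement's English description precedes it below -/
import Mathlib

section
/- Let A be an n × n integer matrix with det A > 0. Then the maximum of det B(A, x, y, z) over all x, y ∈ {0, 1}ⁿ and z ∈ {0, 1} equals the maximum of det B(A, x, y, 1) over all x, y ∈ {0, 1}ⁿ; that is, when extending A to an (n+1) × (n+1) matrix of maximal determinant with 0-1 border entries, one may always take the corner entry to be 1. -/
open Matrix

/-- The bordered matrix `B(A, x, y, z)`: upper-left `n × n` block `A`, first `n` entries of the
last column given by `y`, first `n` entries of the last row given by `x`, corner entry `z`. -/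
def border {n : ℕ} (A : Matrix (Fin n) (Fin n) ℤ) (x y : Fin n → ℤ) (z : ℤ) :
    Matrix (Fin (n + 1)) (Fin (n + 1)) ℤ :=
  Matrix.of fun i j =>
    if hi : (i : ℕ) < n then
      if hj : (j : ℕ) < n then A ⟨i, hi⟩ ⟨j, hj⟩ else y ⟨i, hi⟩
    else
      if hj : (j : ℕ) < n then x ⟨j, hj⟩ else z

lemma last_of_not_lt {n : ℕ} {j : Fin (n+1)} (h : ¬ (j : ℕ) < n) : j = Fin.last n :=
  Fin.ext (by have := j.isLt; simp only [Fin.val_last]; omega)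

lemma border_det_one {n : ℕ} (A : Matrix (Fin n) (Fin n) ℤ) (x y : Fin n → ℤ) :
    (border A x y 1).det = (border A x y 0).det + A.det := by
  have hlast : ¬ ((Fin.last n : Fin (n+1)) : ℕ) < n := by simp
  have h1 : border A x y 1 = updateRow (border A x y 0) (Fin.last n)
      (fun j => border A x y 0 (Fin.last n) j + (Pi.single (Fin.last n) 1 : Fin (n+1) → ℤ) j) := by
    ext i j
    by_cases hi : i = Fin.last n
    · subst hi
      simp only [updateRow_self, border, of_apply]
      by_cases hj : (j : ℕ) < n
      · have hjne : j ≠ Fin.last n := fun h => by simp [h] at hj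
        simp [hlast, hj, Pi.single_eq_of_ne hjne]
      · rw [last_of_not_lt hj]
        simp [hlast]
    · rw [updateRow_ne hi]
      have hi' : (i : ℕ) < n := by
        rcases lt_or_eq_of_le (Nat.lt_succ_iff.mp i.isLt) with h | h
        · exact h
        · exact absurd (Fin.ext h) hi
      simp [border, hi']
  rw [h1]
  rw [show (fun j => border A x y 0 (Fin.last n) j + (Pi.single (Fin.last n) 1 : Fin (n+1) → ℤ) j) = (border A x y 0 (Fin.last n)) + (Pi.single (Fin.last n) 1 : Fin (n+1) → ℤ) from rfl]
  rw [det_updateRow_add, updateRow_eq_self]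
  congr 1
  -- det of updateRow with Pi.single (Fin.last n) 1 equals A.det
  rw [det_succ_row _ (Fin.last n)]
  rw [Fintype.sum_eq_single (Fin.last n)]
  · have : ∀ (i j : Fin n), (updateRow (border A x y 0) (Fin.last n)
        ((Pi.single (Fin.last n) 1 : Fin (n+1) → ℤ))).submatrix (Fin.last n).succAbove (Fin.last n).succAbove i j
        = A i j := by
      intro i j
      simp only [submatrix_apply, Fin.succAbove_last]
      rw [updateRow_ne (by exact (Fin.castSucc_lt_last i).ne)]
      simp [border, i.isLt, j.isLt]
    have hsub : (updateRow (border A x y 0) (Fin.last n)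
        ((Pi.single (Fin.last n) 1 : Fin (n+1) → ℤ))).submatrix (Fin.last n).succAbove (Fin.last n).succAbove = A := by
      ext i j; exact this i j
    rw [hsub]
    simp [Fin.val_last, ← mul_pow]
  · intro j hj
    rw [updateRow_self]
    simp [Pi.single_eq_of_ne hj]

/-- For `det A > 0`, the maximum of `det B(A, x, y, z)` over `x, y ∈ {0, 1}ⁿ`, `z ∈ {0, 1}`
equals the maximum of `det B(A, x, y, 1)` over `x, y ∈ {0, 1}ⁿ`. -/
theorem border_max_corner_one {n : ℕ} (A : Matrix (Fin n) (Fin n) ℤ) (hA : 0 < A.det)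
    (m : ℤ) :
    IsGreatest {d : ℤ | ∃ (x y : Fin n → ℤ) (z : ℤ),
        (∀ i, x i = 0 ∨ x i = 1) ∧ (∀ i, y i = 0 ∨ y i = 1) ∧ (z = 0 ∨ z = 1) ∧
        d = (border A x y z).det} m ↔
    IsGreatest {d : ℤ | ∃ x y : Fin n → ℤ,
        (∀ i, x i = 0 ∨ x i = 1) ∧ (∀ i, y i = 0 ∨ y i = 1) ∧
        d = (border A x y 1).det} m := by
  constructor
  · rintro ⟨⟨x, y, z, hx, hy, hz, hd⟩, hub⟩
    constructor
    · rcases hz with rfl | rfl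
      · exfalso
        have hmem : (border A x y 1).det ∈ {d : ℤ | ∃ (x y : Fin n → ℤ) (z : ℤ),
            (∀ i, x i = 0 ∨ x i = 1) ∧ (∀ i, y i = 0 ∨ y i = 1) ∧ (z = 0 ∨ z = 1) ∧
            d = (border A x y z).det} := ⟨x, y, 1, hx, hy, Or.inr rfl, rfl⟩
        have := hub hmem
        rw [border_det_one, ← hd] at this
        omega
      · exact ⟨x, y, hx, hy, hd⟩
    · rintro d ⟨x', y', hx', hy', hd'⟩
      exact hub ⟨x', y', 1, hx', hy', Or.inr rfl, hd'⟩
  · rintro ⟨⟨x, y, hx, hy, hd⟩, hub⟩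
    constructor
    · exact ⟨x, y, 1, hx, hy, Or.inr rfl, hd⟩
    · rintro d ⟨x', y', z', hx', hy', hz', hd'⟩
      rcases hz' with rfl | rfl
      · have h1 : (border A x' y' 1).det ≤ m := hub ⟨x', y', hx', hy', rfl⟩
        rw [border_det_one] at h1
        omega
      · exact hub ⟨x', y', hx', hy', hd'⟩
end

section
/- The maximum of det B(A₃, x, y, 1) over all vectors x, y ∈ {0, 1}³, where A₃ is the upper-left 3 × 3 submatrix of A₁₅, equals 3, and this maximum is attained by the bordering that yields A₄ (the upper-left 4 × 4 submatrix of A₁₅). -/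
open Matrix

/-- The matrix `A₁₅` from the paper. -/
def A15 : Matrix (Fin 15) (Fin 15) ℤ :=
  !![1, 0, 1, 1, 0, 0, 0, 0, 0, 0, 1, 0, 0, 1, 1;
      1, 1, 0, 0, 0, 1, 0, 1, 1, 1, 1, 0, 0, 0, 0;
      0, 1, 1, 0, 1, 0, 0, 1, 0, 0, 1, 1, 0, 1, 0;
      0, 1, 0, 1, 1, 1, 0, 0, 0, 0, 0, 0, 1, 0, 1;
      1, 0, 0, 0, 1, 1, 1, 1, 0, 0, 0, 0, 0, 1, 0;
      0, 0, 1, 0, 0, 1, 1, 0, 1, 0, 0, 0, 1, 1, 0;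
      0, 1, 0, 1, 0, 0, 1, 1, 0, 0, 1, 0, 1, 1, 0;
      0, 0, 1, 1, 0, 1, 0, 1, 0, 1, 0, 1, 1, 0, 0;
      0, 0, 0, 1, 1, 0, 0, 1, 1, 1, 0, 0, 0, 1, 1;
      1, 1, 1, 0, 1, 0, 1, 0, 0, 1, 0, 0, 1, 0, 0;
      0, 0, 0, 0, 1, 1, 1, 0, 0, 1, 1, 1, 0, 0, 1;
      1, 1, 0, 1, 0, 0, 1, 0, 1, 0, 0, 1, 0, 0, 0;
      1, 0, 0, 0, 1, 0, 0, 1, 1, 0, 1, 1, 1, 0, 1;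
      1, 1, 0, 0, 0, 1, 0, 0, 0, 1, 0, 1, 1, 1, 1;
      0, 1, 1, 0, 0, 0, 1, 1, 0, 0, 0, 0, 0, 0, 1]

/-- `Asub k h` is the upper-left `k × k` submatrix `A_k` of `A₁₅`. -/
def Asub (k : ℕ) (h : k ≤ 15) : Matrix (Fin k) (Fin k) ℤ :=
  A15.submatrix (Fin.castLE h) (Fin.castLE h)

lemma border_eq (x y : Fin 3 → ℤ) :
    border (Asub 3 (by norm_num)) x y 1 =
      !![1, 0, 1, y 0; 1, 1, 0, y 1; 0, 1, 1, y 2; x 0, x 1, x 2, 1] := by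
  ext i j
  fin_cases i <;> fin_cases j <;> rfl

lemma border_det (x y : Fin 3 → ℤ) :
    (border (Asub 3 (by norm_num)) x y 1).det =
      2 - x 0 * y 0 - x 0 * y 1 + x 0 * y 2 + x 1 * y 0 - x 1 * y 1 - x 1 * y 2
        - x 2 * y 0 + x 2 * y 1 - x 2 * y 2 := by
  rw [border_eq, Matrix.det_succ_row_zero]
  simp [Fin.sum_univ_succ, Matrix.det_fin_three, Fin.succAbove_of_castSucc_lt, Fin.succAbove_of_lt_succ, Fin.succAbove_of_le_castSucc]
  ring

/-- The maximum of `det B(A_3, x, y, 1)` over `x, y ∈ {0, 1}^3` equals `3`, and it is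
attained by the bordering of `A_3` that yields `A_4`. -/
theorem border_max_3 :
    IsGreatest {d : ℤ | ∃ x y : Fin 3 → ℤ,
        (∀ i, x i = 0 ∨ x i = 1) ∧ (∀ i, y i = 0 ∨ y i = 1) ∧
        d = (border (Asub 3 (by norm_num)) x y 1).det} 3 ∧
    border (Asub 3 (by norm_num))
        (fun j => A15 ⟨3, by norm_num⟩ (Fin.castLE (by norm_num) j))
        (fun i => A15 (Fin.castLE (by norm_num) i) ⟨3, by norm_num⟩) 1
      = Asub 4 (by norm_num) ∧
    (Asub 4 (by norm_num)).det = 3 := by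
  have hdet4 : (Asub 4 (by norm_num)).det = 3 := by
    have : Asub 4 (by norm_num) = !![1,0,1,1;1,1,0,0;0,1,1,0;0,1,0,1] := by
      ext i j
      fin_cases i <;> fin_cases j <;> rfl
    rw [this, Matrix.det_succ_row_zero]
    simp [Fin.sum_univ_succ, Matrix.det_fin_three, Fin.succAbove_of_castSucc_lt, Fin.succAbove_of_lt_succ, Fin.succAbove_of_le_castSucc]
  have heq : border (Asub 3 (by norm_num))
        (fun j => A15 ⟨3, by norm_num⟩ (Fin.castLE (by norm_num) j))
        (fun i => A15 (Fin.castLE (by norm_num) i) ⟨3, by norm_num⟩) 1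
      = Asub 4 (by norm_num) := by
    ext i j
    fin_cases i <;> fin_cases j <;> rfl
  refine ⟨⟨⟨fun j => A15 ⟨3, by norm_num⟩ (Fin.castLE (by norm_num) j),
      fun i => A15 (Fin.castLE (by norm_num) i) ⟨3, by norm_num⟩, ?_, ?_, ?_⟩, ?_⟩, heq, hdet4⟩
  · intro i; fin_cases i <;> first | exact Or.inl rfl | exact Or.inr rfl
  · intro i; fin_cases i <;> first | exact Or.inl rfl | exact Or.inr rfl
  · rw [heq, hdet4]
  · rintro d ⟨x, y, hx, hy, rfl⟩
    rw [border_det]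
    rcases hx 0 with h0 | h0 <;> rcases hx 1 with h1 | h1 <;> rcases hx 2 with h2 | h2 <;>
      rcases hy 0 with k0 | k0 <;> rcases hy 1 with k1 | k1 <;> rcases hy 2 with k2 | k2 <;>
      rw [h0, h1, h2, k0, k1, k2] <;> norm_num
end

section
/- The maximum of det B(A₅, x, y, 1) over all vectors x, y ∈ {0, 1}⁵, where A₅ is the upper-left 5 × 5 submatrix of A₁₅, equals 9, and this maximum is attained by the bordering that yields A₆ (the upper-left 6 × 6 submatrix of A₁₅). -/
open Matrix

lemma A5e : Asub 5 (by norm_num) = !![1,0,1,1,0;1,1,0,0,0;0,1,1,0,1;0,1,0,1,1;1,0,0,0,1] := by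
  decide
lemma border_expl (x y : Fin 5 → ℤ) :
    border (Asub 5 (by norm_num)) x y 1 =
      !![1,0,1,1,0,y 0; 1,1,0,0,0,y 1; 0,1,1,0,1,y 2; 0,1,0,1,1,y 3; 1,0,0,0,1,y 4;
         x 0, x 1, x 2, x 3, x 4, 1] := by
  rw [A5e]
  ext i j
  fin_cases i <;> fin_cases j <;> rfl

lemma fv_2_0 : ((0 : Fin 2) : ℕ) = 0 := rfl
lemma fv_2_1 : ((1 : Fin 2) : ℕ) = 1 := rfl
lemma fv_3_0 : ((0 : Fin 3) : ℕ) = 0 := rfl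
lemma fv_3_1 : ((1 : Fin 3) : ℕ) = 1 := rfl
lemma fv_3_2 : ((2 : Fin 3) : ℕ) = 2 := rfl
lemma fv_4_0 : ((0 : Fin 4) : ℕ) = 0 := rfl
lemma fv_4_1 : ((1 : Fin 4) : ℕ) = 1 := rfl
lemma fv_4_2 : ((2 : Fin 4) : ℕ) = 2 := rfl
lemma fv_4_3 : ((3 : Fin 4) : ℕ) = 3 := rfl
lemma fv_5_0 : ((0 : Fin 5) : ℕ) = 0 := rfl
lemma fv_5_1 : ((1 : Fin 5) : ℕ) = 1 := rfl
lemma fv_5_2 : ((2 : Fin 5) : ℕ) = 2 := rfl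
lemma fv_5_3 : ((3 : Fin 5) : ℕ) = 3 := rfl
lemma fv_5_4 : ((4 : Fin 5) : ℕ) = 4 := rfl
lemma fv_6_0 : ((0 : Fin 6) : ℕ) = 0 := rfl
lemma fv_6_1 : ((1 : Fin 6) : ℕ) = 1 := rfl
lemma fv_6_2 : ((2 : Fin 6) : ℕ) = 2 := rfl
lemma fv_6_3 : ((3 : Fin 6) : ℕ) = 3 := rfl
lemma fv_6_4 : ((4 : Fin 6) : ℕ) = 4 := rfl
lemma fv_6_5 : ((5 : Fin 6) : ℕ) = 5 := rfl

lemma cons_val_five' {α : Type*} {m : ℕ} (x : α) (u : Fin (m+5) → α) :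
    Matrix.vecCons x u 5 = Matrix.vecHead (Matrix.vecTail (Matrix.vecTail (Matrix.vecTail (Matrix.vecTail u)))) := rfl

set_option maxRecDepth 20000 in
set_option maxHeartbeats 8000000 in
lemma det_key (x y : Fin 5 → ℤ) :
    (border (Asub 5 (by norm_num)) x y 1).det =
      5 + x 0 * (-y 0 - 2*y 1 + y 2 + y 3 - 2*y 4)
        + x 1 * (y 0 - 3*y 1 - y 2 - y 3 + 2*y 4)
        + x 2 * (-2*y 0 + y 1 - 3*y 2 + 2*y 3 + y 4)
        + x 3 * (-2*y 0 + y 1 + 2*y 2 - 3*y 3 + y 4)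
        + x 4 * (y 0 + 2*y 1 - y 2 - y 3 - 3*y 4) := by
  rw [border_expl]
  simp [Matrix.det_succ_row_zero, Fin.sum_univ_succ, Fin.succAbove]
  ring

lemma A6e : Asub 6 (by norm_num) =
    !![1,0,1,1,0,0; 1,1,0,0,0,1; 0,1,1,0,1,0; 0,1,0,1,1,1; 1,0,0,0,1,1; 0,0,1,0,0,1] := by
  decide

/-- The maximum of `det B(A_5, x, y, 1)` over `x, y ∈ {0, 1}^5` equals `9`, and it is
attained by the bordering of `A_5` that yields `A_6`. -/
theorem border_max_5 :
    IsGreatest {d : ℤ | ∃ x y : Fin 5 → ℤ,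
        (∀ i, x i = 0 ∨ x i = 1) ∧ (∀ i, y i = 0 ∨ y i = 1) ∧
        d = (border (Asub 5 (by norm_num)) x y 1).det} 9 ∧
    border (Asub 5 (by norm_num))
        (fun j => A15 ⟨5, by norm_num⟩ (Fin.castLE (by norm_num) j))
        (fun i => A15 (Fin.castLE (by norm_num) i) ⟨5, by norm_num⟩) 1
      = Asub 6 (by norm_num) ∧
    (Asub 6 (by norm_num)).det = 9 := by
  have hxv : (fun j : Fin 5 => A15 ⟨5, by norm_num⟩ (Fin.castLE (by norm_num) j))
      = ![0,0,1,0,0] := by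
    funext j; fin_cases j <;> rfl
  have hyv : (fun i : Fin 5 => A15 (Fin.castLE (by norm_num) i) ⟨5, by norm_num⟩)
      = ![0,1,0,1,1] := by
    funext i; fin_cases i <;> rfl
  have heq : border (Asub 5 (by norm_num))
        (fun j => A15 ⟨5, by norm_num⟩ (Fin.castLE (by norm_num) j))
        (fun i => A15 (Fin.castLE (by norm_num) i) ⟨5, by norm_num⟩) 1
      = Asub 6 (by norm_num) := by
    rw [hxv, hyv, border_expl, A6e]
    norm_num [Matrix.vecHead, Matrix.vecTail]
    decide
  have hdet6 : (Asub 6 (by norm_num)).det = 9 := by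
    rw [← heq, hxv, hyv, det_key]; decide
  refine ⟨⟨⟨![0,0,1,0,0], ![0,1,0,1,1], ?_, ?_, ?_⟩, ?_⟩, heq, hdet6⟩
  · intro i; fin_cases i <;> simp
  · intro i; fin_cases i <;> simp
  · rw [det_key]; decide
  · rintro d ⟨x, y, hx, hy, rfl⟩
    rw [det_key]
    have hb : ∀ j, 0 ≤ x j ∧ x j ≤ 1 := fun j => by rcases hx j with h | h <;> simp [h]
    rcases hy 0 with h0 | h0 <;> rcases hy 1 with h1 | h1 <;> rcases hy 2 with h2 | h2 <;>
      rcases hy 3 with h3 | h3 <;> rcases hy 4 with h4 | h4 <;>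
      rw [h0, h1, h2, h3, h4] <;>
      linarith [(hb 0).1, (hb 0).2, (hb 1).1, (hb 1).2, (hb 2).1, (hb 2).2,
        (hb 3).1, (hb 3).2, (hb 4).1, (hb 4).2]
end

section
/- The maximum of det B(A₇, x, y, 1) over all vectors x, y ∈ {0, 1}⁷, where A₇ is the upper-left 7 × 7 submatrix of A₁₅, equals 40, and this maximum is attained by the bordering that yields A₈ (the upper-left 8 × 8 submatrix of A₁₅). -/
open Matrix

/-! ### Auxiliary machinery -/

lemma border_eq_submatrix {n : ℕ} (A : Matrix (Fin n) (Fin n) ℤ) (x y : Fin n → ℤ) (z : ℤ) :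
    border A x y z =
      (Matrix.fromBlocks A (Matrix.of fun i (_ : Fin 1) => y i)
        (Matrix.of fun (_ : Fin 1) j => x j) (Matrix.of fun (_ : Fin 1) (_ : Fin 1) => z)).submatrix
        finSumFinEquiv.symm finSumFinEquiv.symm := by
  have hs : ∀ i : Fin (n + 1), (finSumFinEquiv.symm i : Fin n ⊕ Fin 1) =
      if h : (i : ℕ) < n then Sum.inl ⟨i, h⟩ else Sum.inr 0 := by
    intro i
    rcases lt_or_ge (i : ℕ) n with h | h
    · rw [dif_pos h, Equiv.symm_apply_eq]
      apply Fin.ext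
      simp [finSumFinEquiv]
    · rw [dif_neg (not_lt.mpr h), Equiv.symm_apply_eq]
      apply Fin.ext
      have hi : (i : ℕ) = n := le_antisymm (Nat.lt_succ_iff.mp i.isLt) h
      simp [finSumFinEquiv, hi]
  ext i j
  simp only [Matrix.submatrix_apply, hs, border, Matrix.of_apply]
  by_cases hi : (i : ℕ) < n <;> by_cases hj : (j : ℕ) < n <;>
    simp [hi, hj, Matrix.fromBlocks]

lemma det_border {n : ℕ} (A N : Matrix (Fin n) (Fin n) ℤ) (d : ℤ) (hd : d ≠ 0)
    (hdet : A.det = d) (h1 : A * N = d • (1 : Matrix (Fin n) (Fin n) ℤ))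
    (h2 : N * A = d • (1 : Matrix (Fin n) (Fin n) ℤ))
    (x y : Fin n → ℤ) (z : ℤ) :
    (border A x y z).det = d * z - x ⬝ᵥ (N *ᵥ y) := by
  have hdN : N.det * d = d ^ n := by
    have h := congrArg Matrix.det h2
    rwa [Matrix.det_mul, Matrix.det_smul, Matrix.det_one, mul_one, hdet,
      Fintype.card_fin] at h
  have hAv : A *ᵥ (N *ᵥ y) = d • y := by
    rw [Matrix.mulVec_mulVec, h1, Matrix.smul_mulVec, Matrix.one_mulVec]
  set Y : Matrix (Fin n) (Fin 1) ℤ := Matrix.of fun i (_ : Fin 1) => y i with hY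
  set X : Matrix (Fin 1) (Fin n) ℤ := Matrix.of fun (_ : Fin 1) j => x j with hX
  set Z : Matrix (Fin 1) (Fin 1) ℤ := Matrix.of fun (_ : Fin 1) (_ : Fin 1) => z with hZ
  set B0 : Matrix (Fin n ⊕ Fin 1) (Fin n ⊕ Fin 1) ℤ := Matrix.fromBlocks A Y X Z with hB0
  set M : Matrix (Fin n ⊕ Fin 1) (Fin n ⊕ Fin 1) ℤ :=
    Matrix.fromBlocks N (Matrix.of fun i (_ : Fin 1) => -((N *ᵥ y) i)) 0
      (Matrix.of fun (_ : Fin 1) (_ : Fin 1) => d) with hM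
  have hprod : B0 * M = Matrix.fromBlocks (d • (1 : Matrix (Fin n) (Fin n) ℤ)) 0 (X * N)
      (Matrix.of fun (_ : Fin 1) (_ : Fin 1) => d * z - x ⬝ᵥ (N *ᵥ y)) := by
    rw [hB0, hM, Matrix.fromBlocks_multiply]
    have hTR : (A * (Matrix.of fun i (_ : Fin 1) => -((N *ᵥ y) i)))
        + Y * (Matrix.of fun (_ : Fin 1) (_ : Fin 1) => d) = 0 := by
      ext i j
      have h := congrFun hAv i
      simp only [Matrix.mulVec, dotProduct, Pi.smul_apply, smul_eq_mul] at h
      simp [Matrix.mul_apply, Matrix.mulVec, dotProduct, mul_neg, hY,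
        Finset.sum_neg_distrib, h]
      ring
    have hBR : X * (Matrix.of fun i (_ : Fin 1) => -((N *ᵥ y) i))
        + Z * (Matrix.of fun (_ : Fin 1) (_ : Fin 1) => d)
        = (Matrix.of fun (_ : Fin 1) (_ : Fin 1) => d * z - x ⬝ᵥ (N *ᵥ y)) := by
      ext i j
      simp [Matrix.mul_apply, Matrix.mulVec, dotProduct, mul_neg, hX, hZ,
        Finset.sum_neg_distrib]
      ring
    simp only [Matrix.mul_zero, add_zero]
    rw [h1, hTR, hBR]
  have hdet2 := congrArg Matrix.det hprod
  rw [Matrix.det_mul, Matrix.det_fromBlocks_zero₁₂, Matrix.det_fromBlocks_zero₂₁] at hdet2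
  have hone : (Matrix.of fun (_ : Fin 1) (_ : Fin 1) => d).det = d := by
    rw [Matrix.det_fin_one]; rfl
  have hone2 : (Matrix.of fun (_ : Fin 1) (_ : Fin 1) => d * z - x ⬝ᵥ (N *ᵥ y)).det
      = d * z - x ⬝ᵥ (N *ᵥ y) := by
    rw [Matrix.det_fin_one]; rfl
  rw [hone, hone2, Matrix.det_smul, Matrix.det_one, mul_one, Fintype.card_fin, ← mul_assoc,
    ] at hdet2
  have hcast : (border A x y z).det = B0.det := by
    rw [border_eq_submatrix, Matrix.det_submatrix_equiv_self, hB0]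
  rw [hcast]
  have hfinal : d ^ n * B0.det = d ^ n * (d * z - x ⬝ᵥ (N *ᵥ y)) := by
    calc d ^ n * B0.det = B0.det * N.det * d := by rw [← hdN]; ring
    _ = d ^ n * (d * z - x ⬝ᵥ (N *ᵥ y)) := hdet2
  exact mul_left_cancel₀ (pow_ne_zero n hd) hfinal

/-! ### The chain of leading principal minors -/

def M1 : Matrix (Fin 1) (Fin 1) ℤ := !![1]
def M2 : Matrix (Fin 2) (Fin 2) ℤ := !![1,0; 1,1]
def M3 : Matrix (Fin 3) (Fin 3) ℤ := !![1,0,1; 1,1,0; 0,1,1]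
def M4 : Matrix (Fin 4) (Fin 4) ℤ := !![1,0,1,1; 1,1,0,0; 0,1,1,0; 0,1,0,1]
def M5 : Matrix (Fin 5) (Fin 5) ℤ :=
  !![1,0,1,1,0; 1,1,0,0,0; 0,1,1,0,1; 0,1,0,1,1; 1,0,0,0,1]
def M6 : Matrix (Fin 6) (Fin 6) ℤ :=
  !![1,0,1,1,0,0; 1,1,0,0,0,1; 0,1,1,0,1,0; 0,1,0,1,1,1; 1,0,0,0,1,1; 0,0,1,0,0,1]
def M7 : Matrix (Fin 7) (Fin 7) ℤ :=
  !![1,0,1,1,0,0,0; 1,1,0,0,0,1,0; 0,1,1,0,1,0,0; 0,1,0,1,1,1,0;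
     1,0,0,0,1,1,1; 0,0,1,0,0,1,1; 0,1,0,1,0,0,1]

def N1 : Matrix (Fin 1) (Fin 1) ℤ := !![1]
def N2 : Matrix (Fin 2) (Fin 2) ℤ := !![1,0; -1,1]
def N3 : Matrix (Fin 3) (Fin 3) ℤ := !![1,1,-1; -1,1,1; 1,-1,1]
def N4 : Matrix (Fin 4) (Fin 4) ℤ := !![1,2,-1,-1; -1,1,1,1; 1,-1,2,-1; 1,-1,-1,2]
def N5 : Matrix (Fin 5) (Fin 5) ℤ :=
  !![1,2,-1,-1,2; -1,3,1,1,-2; 2,-1,3,-2,-1; 2,-1,-2,3,-1; -1,-2,1,1,3]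
def N6 : Matrix (Fin 6) (Fin 6) ℤ :=
  !![3,3,0,-3,3,-3; -1,5,3,1,-4,-2; 2,-1,3,-2,-1,4; 4,-2,-3,5,-2,-1; -1,-4,3,1,5,-2; -2,1,-3,2,1,5]
def N7 : Matrix (Fin 7) (Fin 7) ℤ :=
  !![6,6,0,-6,6,-6,0; -4,8,6,-2,-4,-2,6; 5,-1,6,-2,-4,7,-3; 7,-5,-6,8,-2,-1,3;
     -1,-7,6,4,8,-5,-3; -2,4,-6,8,-2,8,-6; -3,-3,0,-6,6,3,9]

lemma det_M1 : M1.det = 1 := by rw [Matrix.det_fin_one]; rfl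

lemma det_M2 : M2.det = 1 := by
  have hb : border M1 ![1] ![0] 1 = M2 := by decide
  rw [← hb, det_border M1 N1 1 (by norm_num) det_M1 (by decide) (by decide)]
  decide

lemma det_M3 : M3.det = 2 := by
  have hb : border M2 ![0,1] ![1,0] 1 = M3 := by decide
  rw [← hb, det_border M2 N2 1 (by norm_num) det_M2 (by decide) (by decide)]
  decide

lemma det_M4 : M4.det = 3 := by
  have hb : border M3 ![0,1,0] ![1,0,0] 1 = M4 := by decide
  rw [← hb, det_border M3 N3 2 (by norm_num) det_M3 (by decide) (by decide)]
  decide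

lemma det_M5 : M5.det = 5 := by
  have hb : border M4 ![1,0,0,0] ![0,0,1,1] 1 = M5 := by decide
  rw [← hb, det_border M4 N4 3 (by norm_num) det_M4 (by decide) (by decide)]
  decide

lemma det_M6 : M6.det = 9 := by
  have hb : border M5 ![0,0,1,0,0] ![0,1,0,1,1] 1 = M6 := by decide
  rw [← hb, det_border M5 N5 5 (by norm_num) det_M5 (by decide) (by decide)]
  decide

lemma det_M7 : M7.det = 18 := by
  have hb : border M6 ![0,1,0,1,0,0] ![0,0,0,0,1,1] 1 = M7 := by decide
  rw [← hb, det_border M6 N6 9 (by norm_num) det_M6 (by decide) (by decide)]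
  decide

lemma key (x y : Fin 7 → ℤ) :
    (border M7 x y 1).det = 18 - x ⬝ᵥ (N7 *ᵥ y) := by
  rw [det_border M7 N7 18 (by norm_num) det_M7 (by decide) (by decide)]
  ring

set_option maxRecDepth 100000 in
lemma bound_bool : ∀ b : Fin 7 → Bool,
    -22 ≤ ∑ i, min 0 ((N7 *ᵥ (fun j => if b j then (1 : ℤ) else 0)) i) := by decide

lemma bound (x y : Fin 7 → ℤ) (hx : ∀ i, x i = 0 ∨ x i = 1) (hy : ∀ i, y i = 0 ∨ y i = 1) :
    -22 ≤ x ⬝ᵥ (N7 *ᵥ y) := by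
  have h1 : ∀ i, min 0 ((N7 *ᵥ y) i) ≤ x i * ((N7 *ᵥ y) i) := by
    intro i
    rcases hx i with h | h <;> rw [h]
    · simpa using min_le_left 0 ((N7 *ᵥ y) i)
    · simpa using min_le_right 0 ((N7 *ᵥ y) i)
  have hb : y = fun j => if (fun i => decide (y i = 1)) j then (1 : ℤ) else 0 := by
    funext j
    rcases hy j with h | h <;> simp [h]
  have h2 : -22 ≤ ∑ i, min 0 ((N7 *ᵥ y) i) := by
    conv_lhs => skip
    rw [hb]
    exact bound_bool _
  calc (-22 : ℤ) ≤ ∑ i, min 0 ((N7 *ᵥ y) i) := h2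
  _ ≤ ∑ i, x i * ((N7 *ᵥ y) i) := Finset.sum_le_sum fun i _ => h1 i
  _ = x ⬝ᵥ (N7 *ᵥ y) := rfl

/-- The maximum of `det B(A_7, x, y, 1)` over `x, y ∈ {0, 1}^7` equals `40`, and it is
attained by the bordering of `A_7` that yields `A_8`. -/
theorem border_max_7 :
    IsGreatest {d : ℤ | ∃ x y : Fin 7 → ℤ,
        (∀ i, x i = 0 ∨ x i = 1) ∧ (∀ i, y i = 0 ∨ y i = 1) ∧
        d = (border (Asub 7 (by norm_num)) x y 1).det} 40 ∧
    border (Asub 7 (by norm_num))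
        (fun j => A15 ⟨7, by norm_num⟩ (Fin.castLE (by norm_num) j))
        (fun i => A15 (Fin.castLE (by norm_num) i) ⟨7, by norm_num⟩) 1
      = Asub 8 (by norm_num) ∧
    (Asub 8 (by norm_num)).det = 40 := by
  have e7 : Asub 7 (by norm_num) = M7 := by decide
  have e8 : Asub 8 (by norm_num) = border M7 ![0,0,1,1,0,1,0] ![0,1,1,0,1,0,1] 1 := by decide
  refine ⟨⟨⟨![0,0,1,1,0,1,0], ![0,1,1,0,1,0,1], by decide, by decide, ?_⟩, ?_⟩, ?_, ?_⟩
  · rw [e7, key]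
    decide
  · rintro d ⟨x, y, hx, hy, rfl⟩
    rw [e7, key]
    have := bound x y hx hy
    linarith
  · rw [e8]
    ext i j
    fin_cases i <;> fin_cases j <;> rfl
  · rw [e8, key]
    decide
end

section
/- The maximum of det B(A₈, x, y, 1) over all vectors x, y ∈ {0, 1}⁸, where A₈ is the upper-left 8 × 8 submatrix of A₁₅, equals 96, and this maximum is attained by the bordering that yields A₉ (the upper-left 9 × 9 submatrix of A₁₅). -/
set_option maxRecDepth 100000

open Matrix

lemma symm_lt {n : ℕ} {i : Fin (n + 1)} (hi : (i : ℕ) < n) :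
    finSumFinEquiv.symm i = Sum.inl ⟨i, hi⟩ := by
  rw [Equiv.symm_apply_eq, finSumFinEquiv_apply_left]
  exact Fin.ext rfl

lemma symm_ge {n : ℕ} {i : Fin (n + 1)} (hi : ¬ (i : ℕ) < n) :
    finSumFinEquiv.symm i = Sum.inr 0 := by
  rw [Equiv.symm_apply_eq, finSumFinEquiv_apply_right]
  refine Fin.ext ?_
  have : ((Fin.natAdd n (0 : Fin 1)) : ℕ) = n := by simp
  omega

lemma border_eq_fromBlocks {n : ℕ} (A : Matrix (Fin n) (Fin n) ℤ) (x y : Fin n → ℤ) (z : ℤ) :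
    border A x y z = (Matrix.fromBlocks A (Matrix.replicateCol (Fin 1) y) (Matrix.replicateRow (Fin 1) x)
      (Matrix.of fun _ _ => z)).submatrix finSumFinEquiv.symm finSumFinEquiv.symm := by
  ext i j
  by_cases hi : (i : ℕ) < n <;> by_cases hj : (j : ℕ) < n <;>
    simp [border, hi, hj, symm_lt, symm_ge, Matrix.submatrix_apply]

lemma border_det_s11 {n : ℕ} (A M : Matrix (Fin n) (Fin n) ℤ) (d : ℤ) (hd : d ≠ 0)
    (hM : A * M = d • (1 : Matrix (Fin n) (Fin n) ℤ)) (hdet : A.det = d)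
    (x y : Fin n → ℤ) :
    (border A x y 1).det = d - ∑ j, ∑ i, x j * M j i * y i := by
  apply @Int.cast_injective ℚ _
  set Aq : Matrix (Fin n) (Fin n) ℚ := A.map (Int.castRingHom ℚ) with hAq
  set Mq : Matrix (Fin n) (Fin n) ℚ := M.map (Int.castRingHom ℚ) with hMq
  have hAdet : Aq.det = (d : ℚ) := by
    rw [hAq, ← RingHom.mapMatrix_apply, ← RingHom.map_det, hdet]; simp
  have hdq : (d : ℚ) ≠ 0 := Int.cast_ne_zero.mpr hd
  have hAMq : Aq * Mq = (d : ℚ) • 1 := by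
    rw [hAq, hMq, ← Matrix.map_mul, hM]
    ext i j
    by_cases h : i = j <;>
      simp only [Matrix.map_apply, Matrix.smul_apply, Matrix.one_apply, h, if_pos, if_neg,
        smul_eq_mul, mul_one, mul_zero, Int.cast_mul, Int.cast_zero, Int.cast_one,
        Int.coe_castRingHom, ite_true, ite_false, not_false_iff] <;> simp [h]
  have hinv : Aq⁻¹ = (d : ℚ)⁻¹ • Mq := by
    apply Matrix.inv_eq_right_inv
    rw [Matrix.mul_smul, hAMq, smul_smul, inv_mul_cancel₀ hdq, one_smul]
  have hunit : IsUnit Aq.det := by rw [hAdet]; exact isUnit_iff_ne_zero.mpr hdq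
  have h1 : ((border A x y 1).det : ℚ) = ((border A x y 1).map (Int.castRingHom ℚ)).det := by
    rw [← RingHom.mapMatrix_apply, ← RingHom.map_det]; simp
  rw [h1, border_eq_fromBlocks, ← Matrix.submatrix_map, Matrix.det_submatrix_equiv_self]
  have h2 : (Matrix.fromBlocks A (Matrix.replicateCol (Fin 1) y) (Matrix.replicateRow (Fin 1) x)
        (Matrix.of fun _ _ => (1:ℤ))).map (Int.castRingHom ℚ) =
      Matrix.fromBlocks Aq (Matrix.replicateCol (Fin 1) (fun i => (y i : ℚ)))
        (Matrix.replicateRow (Fin 1) (fun i => (x i : ℚ))) (1 : Matrix (Fin 1) (Fin 1) ℚ) := by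
    ext i j
    rcases i with i | i <;> rcases j with j | j <;>
      simp [Matrix.fromBlocks, Matrix.one_apply, hAq, Matrix.map_apply,
        Fin.fin_one_eq_zero]
  rw [h2, Matrix.det_fromBlocks_one₂₂]
  set xq : Fin n → ℚ := fun i => (x i : ℚ) with hxq
  set yq : Fin n → ℚ := fun i => (y i : ℚ) with hyq
  have h3 : Aq - Matrix.replicateCol (Fin 1) yq * Matrix.replicateRow (Fin 1) xq
      = Aq * (1 + Matrix.replicateCol (Fin 1) (-(Aq⁻¹ *ᵥ yq)) * Matrix.replicateRow (Fin 1) xq) := by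
    have hc : Matrix.replicateCol (Fin 1) (-(Aq⁻¹ *ᵥ yq)) = -Matrix.replicateCol (Fin 1) (Aq⁻¹ *ᵥ yq) := by
      ext i j; simp
    rw [hc, Matrix.mul_add, Matrix.mul_one, Matrix.neg_mul, Matrix.mul_neg,
      ← Matrix.mul_assoc, ← Matrix.replicateCol_mulVec, Matrix.mulVec_mulVec,
      Matrix.mul_nonsing_inv _ hunit, Matrix.one_mulVec, sub_eq_add_neg]
  rw [h3, Matrix.det_mul, hAdet]; erw [Matrix.det_one_add_replicateCol_mul_replicateRow]
  rw [hinv]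
  rw [Matrix.smul_mulVec]
  rw [dotProduct_neg, dotProduct_smul, smul_eq_mul]
  have hdot : xq ⬝ᵥ (Mq *ᵥ yq) = ((∑ j, ∑ i, x j * M j i * y i : ℤ) : ℚ) := by
    simp only [dotProduct, Matrix.mulVec, hMq, Matrix.map_apply, Int.coe_castRingHom, hxq, hyq]
    push_cast
    exact Finset.sum_congr rfl fun j _ => by
      rw [Finset.mul_sum]
      exact Finset.sum_congr rfl fun i _ => by ring
  rw [hdot]
  push_cast
  field_simp
  ring

def Madj1 : Matrix (Fin 1) (Fin 1) ℤ :=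
  !![1]

def Madj2 : Matrix (Fin 2) (Fin 2) ℤ :=
  !![1, 0;
    -1, 1]

def Madj3 : Matrix (Fin 3) (Fin 3) ℤ :=
  !![1, 1, -1;
    -1, 1, 1;
    1, -1, 1]

def Madj4 : Matrix (Fin 4) (Fin 4) ℤ :=
  !![1, 2, -1, -1;
    -1, 1, 1, 1;
    1, -1, 2, -1;
    1, -1, -1, 2]

def Madj5 : Matrix (Fin 5) (Fin 5) ℤ :=
  !![1, 2, -1, -1, 2;
    -1, 3, 1, 1, -2;
    2, -1, 3, -2, -1;
    2, -1, -2, 3, -1;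
    -1, -2, 1, 1, 3]

def Madj6 : Matrix (Fin 6) (Fin 6) ℤ :=
  !![3, 3, 0, -3, 3, -3;
    -1, 5, 3, 1, -4, -2;
    2, -1, 3, -2, -1, 4;
    4, -2, -3, 5, -2, -1;
    -1, -4, 3, 1, 5, -2;
    -2, 1, -3, 2, 1, 5]

def Madj7 : Matrix (Fin 7) (Fin 7) ℤ :=
  !![6, 6, 0, -6, 6, -6, 0;
    -4, 8, 6, -2, -4, -2, 6;
    5, -1, 6, -2, -4, 7, -3;
    7, -5, -6, 8, -2, -1, 3;
    -1, -7, 6, 4, 8, -5, -3;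
    -2, 4, -6, 8, -2, 8, -6;
    -3, -3, 0, -6, 6, 3, 9]

def Madj8 : Matrix (Fin 8) (Fin 8) ℤ :=
  !![20, 12, -4, -4, 8, -4, -4, -12;
    0, 16, 8, 8, -16, 8, 8, -16;
    10, -2, 14, -6, -8, 14, -6, 2;
    10, -10, -10, 10, 0, -10, 10, 10;
    0, -16, 12, 12, 16, -8, -8, -4;
    -10, 10, -10, 10, 0, 10, -10, 10;
    0, -8, -4, -4, 8, 16, 16, -12;
    -10, 2, 6, -14, 8, -14, 6, 18]

lemma det1 : (Asub 1 (by norm_num)).det = 1 := by decide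

lemma det2 : (Asub 2 (by norm_num)).det = 1 := by
  have hb : Asub 2 (by norm_num) = border (Asub 1 (by norm_num)) ![1] ![0] 1 := by
    decide
  rw [hb, border_det_s11 (Asub 1 (by norm_num)) Madj1 1 (by decide) (by decide) det1]
  decide

lemma det3 : (Asub 3 (by norm_num)).det = 2 := by
  have hb : Asub 3 (by norm_num) = border (Asub 2 (by norm_num)) ![0, 1] ![1, 0] 1 := by
    decide
  rw [hb, border_det_s11 (Asub 2 (by norm_num)) Madj2 1 (by decide) (by decide) det2]
  decide

lemma det4 : (Asub 4 (by norm_num)).det = 3 := by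
  have hb : Asub 4 (by norm_num) = border (Asub 3 (by norm_num)) ![0, 1, 0] ![1, 0, 0] 1 := by
    decide
  rw [hb, border_det_s11 (Asub 3 (by norm_num)) Madj3 2 (by decide) (by decide) det3]
  decide

lemma det5 : (Asub 5 (by norm_num)).det = 5 := by
  have hb : Asub 5 (by norm_num) = border (Asub 4 (by norm_num)) ![1, 0, 0, 0] ![0, 0, 1, 1] 1 := by
    decide
  rw [hb, border_det_s11 (Asub 4 (by norm_num)) Madj4 3 (by decide) (by decide) det4]
  decide

lemma det6 : (Asub 6 (by norm_num)).det = 9 := by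
  have hb : Asub 6 (by norm_num) = border (Asub 5 (by norm_num)) ![0, 0, 1, 0, 0] ![0, 1, 0, 1, 1] 1 := by
    decide
  rw [hb, border_det_s11 (Asub 5 (by norm_num)) Madj5 5 (by decide) (by decide) det5]
  decide

lemma det7 : (Asub 7 (by norm_num)).det = 18 := by
  have hb : Asub 7 (by norm_num) = border (Asub 6 (by norm_num)) ![0, 1, 0, 1, 0, 0] ![0, 0, 0, 0, 1, 1] 1 := by
    decide
  rw [hb, border_det_s11 (Asub 6 (by norm_num)) Madj6 9 (by decide) (by decide) det6]
  decide

lemma det8 : (Asub 8 (by norm_num)).det = 40 := by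
  have hb : Asub 8 (by norm_num) = border (Asub 7 (by norm_num)) ![0, 0, 1, 1, 0, 1, 0] ![0, 1, 1, 0, 1, 0, 1] 1 := by
    decide
  rw [hb, border_det_s11 (Asub 7 (by norm_num)) Madj7 18 (by decide) (by decide) det7]
  decide

lemma madj8 : Asub 8 (by norm_num) * Madj8 = (40 : ℤ) • 1 := by decide

lemma boundFact : ∀ v : Fin 8 → Bool,
    (-56 : ℤ) ≤ ∑ i, min (∑ j, (bif v j then (1:ℤ) else 0) * Madj8 j i) 0 := by decide

lemma ysum_bound (c y : Fin 8 → ℤ) (hy : ∀ i, y i = 0 ∨ y i = 1) :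
    ∑ i, min (c i) 0 ≤ ∑ i, c i * y i := by
  refine Finset.sum_le_sum fun i _ => ?_
  rcases hy i with h | h
  · rw [h, mul_zero]; exact min_le_right _ _
  · rw [h, mul_one]; exact min_le_left _ _

lemma border9 : border (Asub 8 (by norm_num))
    (fun j => A15 ⟨8, by norm_num⟩ (Fin.castLE (by norm_num) j))
    (fun i => A15 (Fin.castLE (by norm_num) i) ⟨8, by norm_num⟩) 1
    = Asub 9 (by norm_num) := by decide

lemma det9 : (Asub 9 (by norm_num)).det = 96 := by
  rw [← border9, border_det_s11 (Asub 8 (by norm_num)) Madj8 40 (by decide) madj8 det8]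
  decide

/-- The maximum of `det B(A_8, x, y, 1)` over `x, y ∈ {0, 1}^8` equals `96`, and it is
attained by the bordering of `A_8` that yields `A_9`. -/
theorem border_max_8 :
    IsGreatest {d : ℤ | ∃ x y : Fin 8 → ℤ,
        (∀ i, x i = 0 ∨ x i = 1) ∧ (∀ i, y i = 0 ∨ y i = 1) ∧
        d = (border (Asub 8 (by norm_num)) x y 1).det} 96 ∧
    border (Asub 8 (by norm_num))
        (fun j => A15 ⟨8, by norm_num⟩ (Fin.castLE (by norm_num) j))
        (fun i => A15 (Fin.castLE (by norm_num) i) ⟨8, by norm_num⟩) 1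
      = Asub 9 (by norm_num) ∧
    (Asub 9 (by norm_num)).det = 96 := by
  refine ⟨⟨?_, ?_⟩, border9, det9⟩
  · exact ⟨(fun j => A15 ⟨8, by norm_num⟩ (Fin.castLE (by norm_num) j)),
      (fun i => A15 (Fin.castLE (by norm_num) i) ⟨8, by norm_num⟩),
      by decide, by decide, by rw [border9, det9]⟩
  · rintro v ⟨x, y, hx, hy, rfl⟩
    rw [border_det_s11 (Asub 8 (by norm_num)) Madj8 40 (by decide) madj8 det8]
    have hS : ∑ j, ∑ i, x j * Madj8 j i * y i
        = ∑ i, (∑ j, x j * Madj8 j i) * y i := by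
      rw [Finset.sum_comm]
      exact Finset.sum_congr rfl fun i _ => (Finset.sum_mul _ _ _).symm
    have hx' : ∀ j, x j = (bif decide (x j = 1) then (1:ℤ) else 0) := by
      intro j
      rcases hx j with h | h <;> rw [h] <;> rfl
    have hc : ∀ i, (∑ j, x j * Madj8 j i)
        = ∑ j, (bif decide (x j = 1) then (1:ℤ) else 0) * Madj8 j i := by
      intro i
      exact Finset.sum_congr rfl fun j _ => by rw [← hx' j]
    have h1 : (-56 : ℤ) ≤ ∑ j, ∑ i, x j * Madj8 j i * y i := by
      rw [hS]
      calc (-56 : ℤ) ≤ ∑ i, min (∑ j, (bif decide (x j = 1) then (1:ℤ) else 0) * Madj8 j i) 0 :=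
            boundFact (fun j => decide (x j = 1))
        _ = ∑ i, min (∑ j, x j * Madj8 j i) 0 := by
            exact Finset.sum_congr rfl fun i _ => by rw [hc i]
        _ ≤ ∑ i, (∑ j, x j * Madj8 j i) * y i := ysum_bound _ y hy
    linarith
end
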